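/- Let G have maximum degree Δ, ε < 1/3, and let V be partitioned so that every vertex u in the 'sparse' part V_sp has sparsity ζ_u ≥ c·ε²·Δ for a constant 0 < c ≤ 1, and the rest is covered by ε-almost-cliques. Then for any vertex v in an almost-clique C, its external degree e_v = |N(v) \ C| satisfies e_v ≤ 4ζ_v/(c·ε²). -/

import Mathlib

open Finset

/-- Number of edges of `G` with both endpoints in `S` (as a rational, counted via
half the sum of internal degrees). -/
noncomputable def edgesIn {V : Type*} [Fintype V] [DecidableEq V] (G : SimpleGraph V)
    [DecidableRel G.Adj] (S : Finset V) : ℚ :=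
  (∑ u ∈ S, ((G.neighborFinset u ∩ S).card : ℚ)) / 2

/-- Local sparsity ζ_v = (1/Δ)·(Δ(Δ−1)/2 − m(N(v))). -/
noncomputable def sparsity {V : Type*} [Fintype V] [DecidableEq V] (G : SimpleGraph V)
    [DecidableRel G.Adj] (Δ : ℕ) (v : V) : ℚ :=
  ((Δ : ℚ) * ((Δ : ℚ) - 1) / 2 - edgesIn G (G.neighborFinset v)) / Δ



namespace Stmt3Aux

variable {V : Type*} [Fintype V] [DecidableEq V] (G : SimpleGraph V) [DecidableRel G.Adj]

/-- ordered non-adjacent distinct pairs inside `S` -/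
def bp (S : Finset V) : Finset (V × V) :=
  (S ×ˢ S).filter fun p => p.1 ≠ p.2 ∧ ¬ G.Adj p.1 p.2

lemma bp_eq (S : Finset V) :
    bp G S = S.biUnion fun w => {w} ×ˢ ((S \ G.neighborFinset w).erase w) := by
  ext ⟨a, b⟩
  simp only [bp, mem_filter, mem_product, mem_biUnion, mem_erase, mem_sdiff,
    SimpleGraph.mem_neighborFinset, mem_singleton]
  constructor
  · rintro ⟨⟨ha, hb⟩, hne, hadj⟩
    exact ⟨a, ha, rfl, fun h => hne h.symm, hb, hadj⟩
  · rintro ⟨w, hw, rfl, hne, hb, hadj⟩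
    exact ⟨⟨hw, hb⟩, fun h => hne h.symm, hadj⟩

lemma mem_sdiff_self {S : Finset V} {w : V} (hw : w ∈ S) : w ∈ S \ G.neighborFinset w :=
  mem_sdiff.2 ⟨hw, fun h => G.loopless.irrefl w ((SimpleGraph.mem_neighborFinset _ _ _).1 h)⟩

lemma bp_card (S : Finset V) :
    ((bp G S).card : ℚ) = ∑ w ∈ S, (((S \ G.neighborFinset w).card : ℚ) - 1) := by
  rw [bp_eq, card_biUnion]
  · rw [Nat.cast_sum]
    refine sum_congr rfl fun w hw => ?_
    rw [card_product, card_singleton, one_mul,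
      card_erase_of_mem (mem_sdiff_self G hw), Nat.cast_sub]
    · simp
    · exact card_pos.2 ⟨w, mem_sdiff_self G hw⟩
  · intro x hx y hy hxy
    rw [Function.onFun, disjoint_left]
    rintro ⟨a, b⟩ ha hb
    simp only [mem_product, mem_singleton] at ha hb
    exact hxy (ha.1.symm.trans hb.1)

lemma edgesIn_eq (S : Finset V) :
    edgesIn G S = (((S.card : ℚ)) * ((S.card : ℚ) - 1) - ((bp G S).card : ℚ)) / 2 := by
  rw [edgesIn, bp_card]
  congr 1
  have h : ∀ w ∈ S, ((G.neighborFinset w ∩ S).card : ℚ)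
      = (S.card : ℚ) - ((S \ G.neighborFinset w).card : ℚ) := by
    intro w hw
    have := card_sdiff_add_card_inter S (G.neighborFinset w)
    have h2 : (G.neighborFinset w ∩ S).card = (S ∩ G.neighborFinset w).card := by
      rw [inter_comm]
    rw [h2]
    push_cast [← this]
    ring
  rw [sum_congr rfl h, sum_sub_distrib, sum_sub_distrib, sum_const, nsmul_eq_mul, sum_const,
    nsmul_eq_mul]
  ring

lemma key_count {u v : V} (huv : G.Adj u v) :
    ((bp G (G.neighborFinset u)).card : ℚ) ≤ ((bp G (G.neighborFinset v)).card : ℚ)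
      + 2 * (((G.neighborFinset u \ G.neighborFinset v).card : ℚ) - 1)
        * ((G.neighborFinset u).card : ℚ) := by
  classical
  set A := G.neighborFinset v with hA
  set B := G.neighborFinset u with hB
  have hvB : v ∈ B := (SimpleGraph.mem_neighborFinset _ _ _).2 huv
  have hvA : v ∉ A := fun h => G.loopless.irrefl v ((SimpleGraph.mem_neighborFinset _ _ _).1 h)
  have hvBA : v ∈ B \ A := mem_sdiff.2 ⟨hvB, hvA⟩
  set T : Finset V := (B \ A).erase v with hT
  have hvT : v ∉ T := notMem_erase _ _
  have hins : insert v T = B \ A := insert_erase hvBA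
  have hTcard : T.card + 1 = (B \ A).card := by
    rw [← hins, card_insert_of_notMem hvT]
  set R1 : Finset (V × V) := ((B \ A) ×ˢ B).filter (fun p => p.1 ≠ p.2 ∧ ¬ G.Adj p.1 p.2)
    with hR1
  set R2 : Finset (V × V) := (B ×ˢ (B \ A)).filter (fun p => p.1 ≠ p.2 ∧ ¬ G.Adj p.1 p.2)
    with hR2
  -- subset
  have hsub : bp G B ⊆ bp G A ∪ R1 ∪ R2 := by
    rintro ⟨a, b⟩ hp
    rw [bp, mem_filter, mem_product] at hp
    obtain ⟨⟨ha, hb⟩, hab⟩ := hp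
    by_cases haA : a ∈ A
    · by_cases hbA : b ∈ A
      · refine mem_union_left _ (mem_union_left _ ?_)
        rw [bp, mem_filter, mem_product]
        exact ⟨⟨haA, hbA⟩, hab⟩
      · refine mem_union_right _ ?_
        rw [hR2, mem_filter, mem_product, mem_sdiff]
        exact ⟨⟨ha, hb, hbA⟩, hab⟩
    · refine mem_union_left _ (mem_union_right _ ?_)
      rw [hR1, mem_filter, mem_product, mem_sdiff]
      exact ⟨⟨⟨ha, haA⟩, hb⟩, hab⟩
  -- R1 bound
  have hR1card : R1.card ≤ T.card * B.card := by
    have hfib : R1.card = ∑ w ∈ B \ A, (R1.filter fun p => p.1 = w).card := by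
      apply card_eq_sum_card_fiberwise
      intro p hp
      rw [hR1, mem_coe, mem_filter, mem_product] at hp
      exact hp.1.1
    rw [hfib, ← hins, sum_insert hvT]
    have hfv : (R1.filter fun p => p.1 = v).card ≤ T.card := by
      apply card_le_card_of_injOn (fun p => p.2)
      · rintro ⟨a, b⟩ hp
        rw [mem_coe, mem_filter] at hp
        obtain ⟨hp1, hav⟩ := hp
        rw [hR1, mem_filter, mem_product] at hp1
        obtain ⟨⟨_, hbB⟩, hne, hnadj⟩ := hp1
        subst hav
        rw [hT, mem_coe, mem_erase, mem_sdiff]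
        refine ⟨fun h => hne h.symm, hbB, fun hbA => ?_⟩
        exact hnadj ((SimpleGraph.mem_neighborFinset _ _ _).1 hbA)
      · rintro ⟨a, b⟩ hp ⟨a', b'⟩ hp' hbb
        simp only [mem_coe, mem_filter] at hp hp'
        simp only at hbb
        rw [Prod.ext_iff]
        exact ⟨hp.2.trans hp'.2.symm, hbb⟩
    have hfw : ∀ w ∈ T, (R1.filter fun p => p.1 = w).card ≤ B.card - 1 := by
      intro w hwT
      have hsub2 : (R1.filter fun p => p.1 = w) ⊆ {w} ×ˢ (B.erase w) := by
        rintro ⟨a, b⟩ hp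
        rw [mem_filter] at hp
        obtain ⟨hp1, haw⟩ := hp
        rw [hR1, mem_filter, mem_product] at hp1
        obtain ⟨⟨_, hbB⟩, hne, _⟩ := hp1
        subst haw
        rw [mem_product, mem_singleton, mem_erase]
        exact ⟨rfl, fun h => hne h.symm, hbB⟩
      calc (R1.filter fun p => p.1 = w).card ≤ ({w} ×ˢ (B.erase w)).card :=
            card_le_card hsub2
        _ = B.card - 1 := by
            rw [card_product, card_singleton, one_mul, card_erase_of_mem]
            rw [hT, mem_erase, mem_sdiff] at hwT
            exact hwT.2.1
    have hsum : ∑ w ∈ T, (R1.filter fun p => p.1 = w).card ≤ T.card * (B.card - 1) := by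
      calc ∑ w ∈ T, (R1.filter fun p => p.1 = w).card ≤ ∑ _w ∈ T, (B.card - 1) :=
            sum_le_sum hfw
        _ = T.card * (B.card - 1) := by rw [sum_const, smul_eq_mul]
    have hB1 : B.card ≠ 0 := (card_pos.2 ⟨v, hvB⟩).ne'
    obtain ⟨k, hk⟩ := Nat.exists_eq_succ_of_ne_zero hB1
    calc (R1.filter fun p => p.1 = v).card + ∑ w ∈ T, (R1.filter fun p => p.1 = w).card
        ≤ T.card + T.card * (B.card - 1) := Nat.add_le_add hfv hsum
      _ = T.card * B.card := by rw [hk]; simp [Nat.mul_succ, Nat.add_comm]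
  -- R2 via swap
  have hR2card : R2.card ≤ T.card * B.card := by
    have hle : R2.card ≤ R1.card := by
      apply card_le_card_of_injOn Prod.swap
      · rintro ⟨a, b⟩ hp
        rw [hR2, mem_coe, mem_filter, mem_product] at hp
        obtain ⟨⟨haB, hbBA⟩, hne, hnadj⟩ := hp
        rw [hR1, mem_coe, mem_filter, mem_product]
        exact ⟨⟨hbBA, haB⟩, fun h => hne h.symm, fun h => hnadj h.symm⟩
      · intro p _ q _ h
        exact Prod.swap_injective h
    exact hle.trans hR1card
  have hcard : (bp G B).card ≤ (bp G A).card + T.card * B.card + T.card * B.card := by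
    calc (bp G B).card ≤ (bp G A ∪ R1 ∪ R2).card := card_le_card hsub
      _ ≤ (bp G A ∪ R1).card + R2.card := card_union_le _ _
      _ ≤ (bp G A).card + R1.card + R2.card := Nat.add_le_add_right (card_union_le _ _) _
      _ ≤ _ := Nat.add_le_add (Nat.add_le_add_left hR1card _) hR2card
  have hTq : (T.card : ℚ) = ((B \ A).card : ℚ) - 1 := by
    rw [← hTcard]; push_cast; ring
  calc ((bp G B).card : ℚ) ≤ (((bp G A).card + T.card * B.card + T.card * B.card : ℕ) : ℚ) := by
        exact_mod_cast hcard
    _ = ((bp G A).card : ℚ) + 2 * (T.card : ℚ) * (B.card : ℚ) := by push_cast; ring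
    _ = _ := by rw [hTq]

lemma sparsity_rel (Δ : ℕ) (hΔ : 1 ≤ Δ) (hdeg : ∀ w : V, G.degree w ≤ Δ) {u v : V}
    (huv : G.Adj v u) :
    sparsity G Δ u ≤ sparsity G Δ v
      + (((G.neighborFinset v \ G.neighborFinset u).card : ℚ) - 1)
      + ((Δ : ℚ) - ((G.neighborFinset v).card : ℚ)) := by
  classical
  have hΔ0 : (0 : ℚ) < (Δ : ℚ) := by exact_mod_cast hΔ
  have hdq : (((G.neighborFinset v).card : ℚ)) ≤ (Δ : ℚ) := by
    have := hdeg v; rw [← G.card_neighborFinset_eq_degree] at this; exact_mod_cast this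
  have hdBq : (((G.neighborFinset u).card : ℚ)) ≤ (Δ : ℚ) := by
    have := hdeg u; rw [← G.card_neighborFinset_eq_degree] at this; exact_mod_cast this
  have huA : u ∈ G.neighborFinset v := (SimpleGraph.mem_neighborFinset _ _ _).2 huv
  have huB : u ∉ G.neighborFinset u :=
    fun h => G.loopless.irrefl u ((SimpleGraph.mem_neighborFinset _ _ _).1 h)
  have hs1 : (1 : ℚ) ≤ (((G.neighborFinset v \ G.neighborFinset u).card : ℚ)) := by
    have : 0 < (G.neighborFinset v \ G.neighborFinset u).card :=
      card_pos.2 ⟨u, mem_sdiff.2 ⟨huA, huB⟩⟩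
    exact_mod_cast this
  have hABA : ((G.neighborFinset v ∩ G.neighborFinset u).card : ℚ)
      + ((G.neighborFinset v \ G.neighborFinset u).card : ℚ)
      = ((G.neighborFinset v).card : ℚ) := by
    exact_mod_cast congrArg (Nat.cast (R := ℚ))
      (card_inter_add_card_sdiff (G.neighborFinset v) (G.neighborFinset u))
  have hBAB : ((G.neighborFinset u ∩ G.neighborFinset v).card : ℚ)
      + ((G.neighborFinset u \ G.neighborFinset v).card : ℚ)
      = ((G.neighborFinset u).card : ℚ) := by
    exact_mod_cast congrArg (Nat.cast (R := ℚ))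
      (card_inter_add_card_sdiff (G.neighborFinset u) (G.neighborFinset v))
  have hIC : ((G.neighborFinset v ∩ G.neighborFinset u).card : ℚ)
      = ((G.neighborFinset u ∩ G.neighborFinset v).card : ℚ) := by
    rw [inter_comm]
  have hICB : ((G.neighborFinset v ∩ G.neighborFinset u).card : ℚ)
      ≤ ((G.neighborFinset u).card : ℚ) := by
    exact_mod_cast card_le_card
      (inter_subset_right : G.neighborFinset v ∩ G.neighborFinset u ⊆ G.neighborFinset u)
  have hkey := key_count G huv.symm
  have hkey2 : edgesIn G (G.neighborFinset v) - edgesIn G (G.neighborFinset u)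
      ≤ ((((G.neighborFinset v \ G.neighborFinset u).card : ℚ) - 1)
        + ((Δ : ℚ) - ((G.neighborFinset v).card : ℚ))) * (Δ : ℚ) := by
    rw [edgesIn_eq, edgesIn_eq]
    have hNA : (0 : ℚ) ≤ ((bp G (G.neighborFinset v)).card : ℚ) := Nat.cast_nonneg _
    have hNB : (0 : ℚ) ≤ ((bp G (G.neighborFinset u)).card : ℚ) := Nat.cast_nonneg _
    rcases le_total ((G.neighborFinset u).card : ℚ) ((G.neighborFinset v).card : ℚ)
      with hcase | hcase
    · nlinarith [mul_nonneg (sub_nonneg.2 hdq) (sub_nonneg.2 hs1),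
        mul_nonneg (sub_nonneg.2 hcase) (sub_nonneg.2 hs1),
        mul_nonneg (sub_nonneg.2 hdBq) (sub_nonneg.2 hs1),
        mul_nonneg (sub_nonneg.2 hcase)
          (by linarith : (0:ℚ) ≤ ((G.neighborFinset v \ G.neighborFinset u).card : ℚ)
            - (((G.neighborFinset v).card : ℚ) - ((G.neighborFinset u).card : ℚ))),
        mul_nonneg (sub_nonneg.2 hdq) hΔ0.le]
    · nlinarith [mul_nonneg (sub_nonneg.2 hdBq) (sub_nonneg.2 hs1),
        mul_nonneg (sub_nonneg.2 hcase)
          (by linarith : (0:ℚ) ≤ 2*(Δ:ℚ) - (((G.neighborFinset u).card : ℚ)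
            - ((G.neighborFinset v).card : ℚ)) - 1),
        mul_nonneg hΔ0.le (sub_nonneg.2 hdBq),
        mul_nonneg hΔ0.le (sub_nonneg.2 hdq)]
  have h3 : sparsity G Δ u - sparsity G Δ v
      = (edgesIn G (G.neighborFinset v) - edgesIn G (G.neighborFinset u)) / (Δ : ℚ) := by
    rw [sparsity, sparsity]
    field_simp
    ring
  have h4 : (edgesIn G (G.neighborFinset v) - edgesIn G (G.neighborFinset u)) / (Δ : ℚ)
      ≤ (((G.neighborFinset v \ G.neighborFinset u).card : ℚ) - 1)
        + ((Δ : ℚ) - ((G.neighborFinset v).card : ℚ)) :=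
    (div_le_iff₀ hΔ0).2 hkey2
  linarith [h3, h4]

lemma sum_identity (Δ : ℕ) (hΔ : 1 ≤ Δ) (v : V) :
    2 * (Δ : ℚ) * sparsity G Δ v
      = (∑ u ∈ G.neighborFinset v,
          (((G.neighborFinset v \ G.neighborFinset u).card : ℚ) - 1))
        + ((Δ : ℚ) - ((G.neighborFinset v).card : ℚ))
          * ((Δ : ℚ) + ((G.neighborFinset v).card : ℚ) - 1) := by
  have hΔ0 : ((Δ : ℚ)) ≠ 0 := by
    have : (0:ℚ) < (Δ:ℚ) := by exact_mod_cast hΔ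
    exact this.ne'
  rw [← bp_card, sparsity, edgesIn_eq]
  field_simp
  ring

end Stmt3Aux

open Stmt3Aux in
theorem stmt3 {V : Type*} [Fintype V] [DecidableEq V] (G : SimpleGraph V)
    [DecidableRel G.Adj] (Δ : ℕ) (hΔ : 1 ≤ Δ) (hdeg : ∀ w : V, G.degree w ≤ Δ)
    (ε c : ℚ) (hε0 : 0 < ε) (hε : ε < 1/3) (hc0 : 0 < c) (hc1 : c ≤ 1)
    (Vsp : Finset V) (𝒜 : Finset (Finset V))
    (hcover : ∀ u : V, u ∈ Vsp ∨ ∃ C' ∈ 𝒜, u ∈ C')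
    (hdisjsp : ∀ C' ∈ 𝒜, Disjoint Vsp C')
    (hpairwise : ∀ C' ∈ 𝒜, ∀ C'' ∈ 𝒜, C' ≠ C'' → Disjoint C' C'')
    (hsparse : ∀ u ∈ Vsp, c * ε ^ 2 * Δ ≤ sparsity G Δ u)
    (hACcard : ∀ C' ∈ 𝒜, ((C' : Finset V).card : ℚ) ≤ (1 + ε) * Δ)
    (hACdeg : ∀ C' ∈ 𝒜, ∀ v ∈ C', (1 - ε) * Δ ≤ ((G.neighborFinset v ∩ C').card : ℚ))
    (C : Finset V) (hC : C ∈ 𝒜) (v : V) (hv : v ∈ C) :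
    ((G.neighborFinset v \ C).card : ℚ) ≤ 4 * sparsity G Δ v / (c * ε ^ 2) := by
  classical
  have hΔ0 : (0 : ℚ) < (Δ : ℚ) := by exact_mod_cast hΔ
  have hcε2 : (0 : ℚ) < c * ε ^ 2 := by positivity
  have hdq : (((G.neighborFinset v).card : ℚ)) ≤ (Δ : ℚ) := by
    have := hdeg v; rw [← G.card_neighborFinset_eq_degree] at this; exact_mod_cast this
  have hdC : (1 - ε) * (Δ : ℚ) ≤ ((G.neighborFinset v ∩ C).card : ℚ) := hACdeg C hC v hv
  have hdCd : ((G.neighborFinset v ∩ C).card : ℚ) + ((G.neighborFinset v \ C).card : ℚ)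
      = ((G.neighborFinset v).card : ℚ) := by
    exact_mod_cast congrArg (Nat.cast (R := ℚ))
      (card_inter_add_card_sdiff (G.neighborFinset v) C)
  -- sum identity and nonnegativity of terms
  have hsumid := sum_identity G Δ hΔ v
  have hterm : ∀ u ∈ G.neighborFinset v,
      (0 : ℚ) ≤ ((G.neighborFinset v \ G.neighborFinset u).card : ℚ) - 1 := by
    intro u hu
    have huB : u ∉ G.neighborFinset u :=
      fun h => G.loopless.irrefl u ((SimpleGraph.mem_neighborFinset _ _ _).1 h)
    have : 0 < (G.neighborFinset v \ G.neighborFinset u).card :=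
      card_pos.2 ⟨u, mem_sdiff.2 ⟨hu, huB⟩⟩
    have h1 : (1:ℚ) ≤ ((G.neighborFinset v \ G.neighborFinset u).card : ℚ) := by
      exact_mod_cast this
    linarith
  have hζ0 : (0 : ℚ) ≤ sparsity G Δ v := by
    have h2 : (0:ℚ) ≤ 2 * (Δ:ℚ) * sparsity G Δ v := by
      rw [hsumid]
      have := sum_nonneg hterm
      have hΔ1 : (1:ℚ) ≤ (Δ:ℚ) := by exact_mod_cast hΔ
      have hdnn : (0:ℚ) ≤ ((G.neighborFinset v).card : ℚ) := Nat.cast_nonneg _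
      nlinarith [this, mul_nonneg (sub_nonneg.2 hdq)
        (by linarith : (0:ℚ) ≤ (Δ:ℚ) + ((G.neighborFinset v).card : ℚ) - 1)]
    nlinarith [h2, hΔ0]
  -- Case εΔ < 1 : external degree is zero
  rcases lt_or_ge (ε * Δ) 1 with hsmall | hbig
  · have hgt : ((G.neighborFinset v).card : ℚ) - 1 < ((G.neighborFinset v ∩ C).card : ℚ) := by
      nlinarith [hdq, hdC, hsmall]
    have hle : (G.neighborFinset v).card ≤ (G.neighborFinset v ∩ C).card := by
      have : ((G.neighborFinset v).card : ℚ) < ((G.neighborFinset v ∩ C).card : ℚ) + 1 := by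
        linarith
      have h2 : (G.neighborFinset v).card < (G.neighborFinset v ∩ C).card + 1 := by
        exact_mod_cast this
      omega
    have heq : G.neighborFinset v ∩ C = G.neighborFinset v :=
      eq_of_subset_of_card_le inter_subset_left hle
    have hempty : G.neighborFinset v \ C = ∅ := by
      rw [sdiff_eq_empty_iff_subset]
      intro x hx
      have hxx : x ∈ G.neighborFinset v ∩ C := by rw [heq]; exact hx
      exact (mem_inter.1 hxx).2
    rw [hempty]
    simp only [card_empty, Nat.cast_zero]
    positivity
  · -- here Δ ≥ 4
    have hΔ4 : (4 : ℚ) ≤ (Δ : ℚ) := by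
      have h3 : (3:ℚ) < (Δ:ℚ) := by
        nlinarith [hbig, mul_pos (show (0:ℚ) < 1/3 - ε by linarith) hΔ0]
      have : (3:ℕ) < Δ := by exact_mod_cast h3
      exact_mod_cast this
    have hd1 : (1 : ℚ) ≤ ((G.neighborFinset v).card : ℚ) := by
      linarith [hdC, hdCd, hΔ4,
        (Nat.cast_nonneg (G.neighborFinset v \ C).card : (0:ℚ) ≤ _),
        mul_nonneg (show (0:ℚ) ≤ 1/3 - ε by linarith) hΔ0.le]
    have heε : ((G.neighborFinset v \ C).card : ℚ) ≤ ε * Δ := by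
      linarith [hdC, hdCd, hdq]
    -- reduce goal to e * K ≤ 4 ζ Δ
    rw [le_div_iff₀ hcε2]
    have hred : ((G.neighborFinset v \ C).card : ℚ) * (c * ε ^ 2) * (Δ:ℚ)
        ≤ 4 * sparsity G Δ v * (Δ:ℚ)
        → ((G.neighborFinset v \ C).card : ℚ) * (c * ε ^ 2) ≤ 4 * sparsity G Δ v :=
      fun h => le_of_mul_le_mul_right h hΔ0
    apply hred
    rcases le_total (c * ε ^ 2 * (Δ:ℚ)) (4 * sparsity G Δ v) with hK4 | hK4
    · -- big ζ case
      have heΔ : ((G.neighborFinset v \ C).card : ℚ) ≤ (Δ:ℚ) := by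
        linarith [hdCd, hdq, (Nat.cast_nonneg (G.neighborFinset v ∩ C).card : (0:ℚ) ≤ _)]
      calc ((G.neighborFinset v \ C).card : ℚ) * (c * ε ^ 2) * (Δ:ℚ)
          = ((G.neighborFinset v \ C).card : ℚ) * (c * ε ^ 2 * (Δ:ℚ)) := by ring
        _ ≤ (Δ:ℚ) * (c * ε ^ 2 * (Δ:ℚ)) :=
            mul_le_mul_of_nonneg_right heΔ (by positivity)
        _ ≤ (Δ:ℚ) * (4 * sparsity G Δ v) := mul_le_mul_of_nonneg_left hK4 hΔ0.le
        _ = 4 * sparsity G Δ v * (Δ:ℚ) := by ring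
    · -- small ζ
      rcases le_total (c * ε ^ 2 * (Δ:ℚ) / 4) ((Δ:ℚ) - ((G.neighborFinset v).card : ℚ))
        with hδ | hδ
      · -- degree deficit large
        have hsumnn : (0:ℚ) ≤ ∑ u ∈ G.neighborFinset v,
            (((G.neighborFinset v \ G.neighborFinset u).card : ℚ) - 1) := sum_nonneg hterm
        have h2e : 2 * ((G.neighborFinset v \ C).card : ℚ)
            ≤ (Δ:ℚ) + ((G.neighborFinset v).card : ℚ) - 1 := by
          linarith [heε, hd1, hΔ4,
            mul_nonneg (show (0:ℚ) ≤ 1/3 - ε by linarith) hΔ0.le]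
        have hstep1 : (c * ε ^ 2 * (Δ:ℚ) / 4)
              * ((Δ:ℚ) + ((G.neighborFinset v).card : ℚ) - 1)
            ≤ ((Δ:ℚ) - ((G.neighborFinset v).card : ℚ))
              * ((Δ:ℚ) + ((G.neighborFinset v).card : ℚ) - 1) :=
          mul_le_mul_of_nonneg_right hδ (by linarith [hd1, hΔ4])
        have hstep2 : (c * ε ^ 2 * (Δ:ℚ) / 4)
              * (2 * ((G.neighborFinset v \ C).card : ℚ))
            ≤ (c * ε ^ 2 * (Δ:ℚ) / 4)
              * ((Δ:ℚ) + ((G.neighborFinset v).card : ℚ) - 1) :=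
          mul_le_mul_of_nonneg_left h2e (by positivity)
        linarith [hsumid, hsumnn, hstep1, hstep2]
      · -- per-vertex bound on external neighbors
        have hub : ∀ u ∈ G.neighborFinset v \ C,
            c * ε ^ 2 * (Δ:ℚ) / 2 ≤ ((G.neighborFinset v \ G.neighborFinset u).card : ℚ) - 1 := by
          intro u hu
          obtain ⟨huA, huC⟩ := mem_sdiff.1 hu
          have hadj : G.Adj v u := (SimpleGraph.mem_neighborFinset _ _ _).1 huA
          rcases hcover u with hVsp | ⟨C', hC', huC'⟩
          · have h1 := hsparse u hVsp
            have h2 := sparsity_rel G Δ hΔ hdeg hadj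
            linarith [h1, h2, hK4, hδ]
          · have hne : C' ≠ C := fun h => huC (h ▸ huC')
            have hdisj : Disjoint C' C := hpairwise C' hC' C hC hne
            have h1 : (1 - ε) * (Δ : ℚ) ≤ ((G.neighborFinset u ∩ C').card : ℚ) :=
              hACdeg C' hC' u huC'
            have hBq : (((G.neighborFinset u).card : ℚ)) ≤ (Δ : ℚ) := by
              have := hdeg u; rw [← G.card_neighborFinset_eq_degree] at this
              exact_mod_cast this
            have h2 : ((G.neighborFinset u ∩ C').card : ℚ)
                + ((G.neighborFinset u ∩ C).card : ℚ) ≤ ((G.neighborFinset u).card : ℚ) := by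
              have hdisj2 : Disjoint (G.neighborFinset u ∩ C') (G.neighborFinset u ∩ C) :=
                Disjoint.mono inter_subset_right inter_subset_right hdisj
            
              have := card_le_card (union_subset
                (inter_subset_left : G.neighborFinset u ∩ C' ⊆ G.neighborFinset u)
                (inter_subset_left : G.neighborFinset u ∩ C ⊆ G.neighborFinset u))
              rw [card_union_of_disjoint hdisj2] at this
              exact_mod_cast this
            -- (A∩C) \ B ⊆ A \ B  and  (A∩C)∩B ⊆ B∩C
            have h3 : ((G.neighborFinset v ∩ C).card : ℚ)
                ≤ ((G.neighborFinset v \ G.neighborFinset u).card : ℚ)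
                  + ((G.neighborFinset u ∩ C).card : ℚ) := by
              have e1 : (G.neighborFinset v ∩ C) \ G.neighborFinset u
                  ⊆ G.neighborFinset v \ G.neighborFinset u :=
                sdiff_subset_sdiff inter_subset_left (le_refl _)
              have e2 : (G.neighborFinset v ∩ C) ∩ G.neighborFinset u
                  ⊆ G.neighborFinset u ∩ C := by
                intro x hx
                simp only [mem_inter] at hx ⊢
                exact ⟨hx.2, hx.1.2⟩
              have e3 := card_inter_add_card_sdiff (G.neighborFinset v ∩ C) (G.neighborFinset u)
              have e4 := card_le_card e1
              have e5 := card_le_card e2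
              have : (G.neighborFinset v ∩ C).card
                  ≤ (G.neighborFinset v \ G.neighborFinset u).card
                    + (G.neighborFinset u ∩ C).card := by omega
              exact_mod_cast this
            -- s ≥ (1-2ε)Δ , conclude
            linarith [hdC, h1, h2, h3, hBq, hΔ4,
              mul_nonneg (mul_nonneg (sub_nonneg.2 hc1) (sq_nonneg ε)) hΔ0.le,
              mul_nonneg (mul_nonneg (show (0:ℚ) ≤ 1/3 - ε by linarith)
                (show (0:ℚ) ≤ 1/3 + ε by linarith)) hΔ0.le,
              mul_nonneg (show (0:ℚ) ≤ 1/3 - ε by linarith) hΔ0.le]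
        -- combine
        have hsub : G.neighborFinset v \ C ⊆ G.neighborFinset v := sdiff_subset
        have hs1 : ∑ u ∈ G.neighborFinset v \ C,
              (((G.neighborFinset v \ G.neighborFinset u).card : ℚ) - 1)
            ≤ ∑ u ∈ G.neighborFinset v,
              (((G.neighborFinset v \ G.neighborFinset u).card : ℚ) - 1) :=
          sum_le_sum_of_subset_of_nonneg hsub (fun i hi _ => hterm i hi)
        have hs2 : ((G.neighborFinset v \ C).card : ℚ) * (c * ε ^ 2 * (Δ:ℚ) / 2)
            ≤ ∑ u ∈ G.neighborFinset v \ C,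
              (((G.neighborFinset v \ G.neighborFinset u).card : ℚ) - 1) := by
          have := card_nsmul_le_sum (G.neighborFinset v \ C)
            (fun u => (((G.neighborFinset v \ G.neighborFinset u).card : ℚ) - 1))
            (c * ε ^ 2 * (Δ:ℚ) / 2) hub
          rwa [nsmul_eq_mul] at this
        have hδnn : (0:ℚ) ≤ ((Δ:ℚ) - ((G.neighborFinset v).card : ℚ))
            * ((Δ:ℚ) + ((G.neighborFinset v).card : ℚ) - 1) :=
          mul_nonneg (sub_nonneg.2 hdq) (by nlinarith [hd1, hΔ4])
        linarith [hsumid, hs1, hs2, hδnn]
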